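/- Let S be a real n×n matrix, N ⊆ ℝⁿ a subspace of dimension d with S(x,y) = 0 for all x,y ∈ N (as a bilinear form). Then for every z ∈ S¹∖{1}, the hermitian form H(z) = (1−z)S + (1−z̄)Sᵗ vanishes on the complexification of N, and hence |signature(H(z))| ≤ n − 2d + dim ker H(z). -/

import Mathlib

open Matrix

private lemma star_sum_smul_dot' {ι : Type*} [Fintype ι] {n : ℕ} (c : ι → ℂ)
    (v : ι → Fin n → ℂ) (w : Fin n → ℂ) :
    star (∑ i, c i • v i) ⬝ᵥ w = ∑ i, (starRingEnd ℂ) (c i) * (star (v i) ⬝ᵥ w) := by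
  simp [dotProduct, Finset.sum_mul, Finset.mul_sum]
  rw [Finset.sum_comm]
  simp [mul_assoc]

private lemma dot_sum' {ι : Type*} [Fintype ι] {n : ℕ} (u : Fin n → ℂ) (f : ι → Fin n → ℂ) :
    u ⬝ᵥ (∑ i, f i) = ∑ i, u ⬝ᵥ f i := by
  simp [dotProduct, Finset.mul_sum]
  rw [Finset.sum_comm]

/-- If the hermitian form of `H` vanishes on `W` and `s` is a set of indices whose
eigenvalues all have sign `ε`, then `s.card + finrank W ≤ n`. -/
private lemma card_add_finrank_le' {n : ℕ} (H : Matrix (Fin n) (Fin n) ℂ)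
    (hHerm : H.IsHermitian) (W : Submodule ℂ (Fin n → ℂ))
    (hW : ∀ x ∈ W, star x ⬝ᵥ H.mulVec x = 0)
    (ε : ℝ) (s : Finset (Fin n)) (hs : ∀ i ∈ s, 0 < ε * hHerm.eigenvalues i) :
    s.card + Module.finrank ℂ W ≤ n := by
  classical
  set v : Fin n → (Fin n → ℂ) := fun i => (hHerm.eigenvectorBasis i : EuclideanSpace ℂ (Fin n))
  have horth : ∀ i j, star (v i) ⬝ᵥ v j = if i = j then 1 else 0 := by
    intro i j
    have h := hHerm.eigenvectorBasis.orthonormal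
    rw [orthonormal_iff_ite] at h
    have h2 := h i j
    rw [EuclideanSpace.inner_eq_star_dotProduct] at h2
    rw [dotProduct_comm]; exact h2
  have heig : ∀ i, H *ᵥ v i = (hHerm.eigenvalues i : ℂ) • v i := by
    intro i
    have := hHerm.mulVec_eigenvectorBasis i
    convert this using 2
    ext k; simp [v, Complex.real_smul]
  have key : ∀ (c : s → ℂ), star (∑ i : s, c i • v i) ⬝ᵥ H *ᵥ (∑ i : s, c i • v i)
      = ((∑ i : s, Complex.normSq (c i) * hHerm.eigenvalues i : ℝ) : ℂ) := by
    intro c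
    have hmv : H *ᵥ (∑ i : s, c i • v i) = ∑ i : s, c i • ((hHerm.eigenvalues i : ℂ) • v i) := by
      rw [← mulVecLin_apply, map_sum]
      simp [heig]
    have hterm : ∀ i j : s, star (v i) ⬝ᵥ (c j • ((hHerm.eigenvalues (j:Fin n) : ℂ) • v j))
        = if i = j then c j * (hHerm.eigenvalues (j : Fin n) : ℂ) else 0 := by
      intro i j
      rw [smul_smul, dotProduct_smul, horth]
      simp only [Subtype.coe_inj]
      split <;> simp
    rw [hmv, star_sum_smul_dot']
    simp only [dot_sum', hterm, Finset.sum_ite_eq, Finset.mem_univ, if_true]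
    push_cast
    refine Finset.sum_congr rfl fun i _ => ?_
    rw [Complex.normSq_eq_conj_mul_self]
    ring
  have hindep : LinearIndependent ℂ (fun i : s => v i) := by
    rw [Fintype.linearIndependent_iff]
    intro c hc i
    have h0 := congrArg (fun w => star (v (i : Fin n)) ⬝ᵥ w) hc
    simp only [dot_sum', dotProduct_smul, horth, dotProduct_zero] at h0
    simp only [Subtype.coe_inj, smul_eq_mul, mul_ite, mul_one, mul_zero,
      Finset.sum_ite_eq, Finset.mem_univ, if_true] at h0
    exact h0
  set P : Submodule ℂ (Fin n → ℂ) := Submodule.span ℂ (Set.range fun i : s => v i) with hP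
  have hcard : Module.finrank ℂ P = s.card := by
    rw [hP, finrank_span_eq_card hindep, Fintype.card_coe]
  have hdisj : P ⊓ W = ⊥ := by
    rw [eq_bot_iff]
    rintro x ⟨hxP, hxW⟩
    obtain ⟨c, rfl⟩ := (Submodule.mem_span_range_iff_exists_fun ℂ).mp hxP
    have hform := hW _ hxW
    rw [key] at hform
    have hre : (∑ i : s, Complex.normSq (c i) * hHerm.eigenvalues i : ℝ) = 0 := by
      exact_mod_cast hform
    have hzero : ∀ i : s, c i = 0 := by
      intro i
      have hall : ∀ j ∈ (Finset.univ : Finset s),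
          0 ≤ ε * (Complex.normSq (c j) * hHerm.eigenvalues j) := fun j _ => by
        have := hs j j.2
        nlinarith [Complex.normSq_nonneg (c j)]
      have hsum0 : ∑ j : s, ε * (Complex.normSq (c j) * hHerm.eigenvalues j) = 0 := by
        rw [← Finset.mul_sum, hre, mul_zero]
      have h0 := (Finset.sum_eq_zero_iff_of_nonneg hall).mp hsum0 i (Finset.mem_univ i)
      have hε := hs i i.2
      have hmul : Complex.normSq (c i) * (ε * hHerm.eigenvalues i) = 0 := by
        linear_combination h0
      have hns : Complex.normSq (c i) = 0 :=
        (mul_eq_zero.mp hmul).resolve_right (ne_of_gt hε)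
      exact Complex.normSq_eq_zero.mp hns
    simp only [Submodule.mem_bot]
    exact Finset.sum_eq_zero fun i _ => by rw [hzero i, zero_smul]
  have hfin : Module.finrank ℂ P + Module.finrank ℂ W ≤ n := by
    have h1 := Submodule.finrank_sup_add_finrank_inf_eq P W
    rw [hdisj] at h1
    have h2 : Module.finrank ℂ ↥(P ⊔ W) ≤ n := by
      have := Submodule.finrank_le (P ⊔ W)
      simpa using this
    simp only [finrank_bot, add_zero] at h1
    omega
  omega

private lemma complexify_finrank_le' {n : ℕ} (N : Submodule ℝ (Fin n → ℝ)) :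
    Module.finrank ℝ N ≤ Module.finrank ℂ
      (Submodule.span ℂ ((fun (v : Fin n → ℝ) => fun i => (v i : ℂ)) '' N)) := by
  classical
  set d := Module.finrank ℝ N with hdd
  set b := Module.finBasis ℝ N
  set f : Fin d → (Fin n → ℂ) := fun i => fun j => (((b i : Fin n → ℝ)) j : ℂ) with hf
  have hrindep : LinearIndependent ℝ (fun i : Fin d => ((b i : N) : Fin n → ℝ)) :=
    b.linearIndependent.map' N.subtype N.ker_subtype
  have hindep : LinearIndependent ℂ f := by
    rw [Fintype.linearIndependent_iff]
    intro c hc i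
    have hcomp : ∀ j, ∑ k, c k * (((b k : Fin n → ℝ)) j : ℂ) = 0 := by
      intro j
      have := congrFun hc j
      simpa [Finset.sum_apply, hf] using this
    have hre : ∑ k, (c k).re • ((b k : N) : Fin n → ℝ) = 0 := by
      funext j
      have := congrArg Complex.re (hcomp j)
      simpa [Complex.mul_re, Finset.sum_apply] using this
    have him : ∑ k, (c k).im • ((b k : N) : Fin n → ℝ) = 0 := by
      funext j
      have := congrArg Complex.im (hcomp j)
      simpa [Complex.mul_im, Finset.sum_apply] using this
    have h1 := Fintype.linearIndependent_iff.mp hrindep _ hre i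
    have h2 := Fintype.linearIndependent_iff.mp hrindep _ him i
    exact Complex.ext h1 h2
  have hle : Submodule.span ℂ (Set.range f) ≤
      Submodule.span ℂ ((fun (v : Fin n → ℝ) => fun i => (v i : ℂ)) '' N) := by
    apply Submodule.span_le.mpr
    rintro x ⟨i, rfl⟩
    exact Submodule.subset_span ⟨(b i : Fin n → ℝ), (b i).2, rfl⟩
  calc d = Module.finrank ℂ (Submodule.span ℂ (Set.range f)) := by
        rw [finrank_span_eq_card hindep, Fintype.card_fin]
    _ ≤ _ := Submodule.finrank_mono hle

/-- The signature of a hermitian matrix: number of positive eigenvalues minus number of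
negative eigenvalues. -/
noncomputable def hermSig {m : Type*} [Fintype m] [DecidableEq m]
    (A : Matrix m m ℂ) (hA : A.IsHermitian) : ℤ :=
  ((Finset.univ.filter fun i => 0 < hA.eigenvalues i).card : ℤ) -
  ((Finset.univ.filter fun i => hA.eigenvalues i < 0).card : ℤ)

/-- if the real bilinear form `S` vanishes on a `d`-dimensional subspace
`N ⊆ ℝⁿ`, then for every `z ∈ S¹∖{1}` the hermitian form
`H(z) = (1−z)S + (1−z̄)Sᵗ` vanishes on the complexification of `N`, and
`|signature H(z)| ≤ n − 2d + dim ker H(z)`. -/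
theorem murasugi_inequality_core {n : ℕ}
    (S : Matrix (Fin n) (Fin n) ℝ)
    (N : Submodule ℝ (Fin n → ℝ)) (d : ℕ) (hd : Module.finrank ℝ N = d)
    (hvan : ∀ x ∈ N, ∀ y ∈ N, x ⬝ᵥ S.mulVec y = 0)
    (z : ℂ) (hz : z * star z = 1) (hz1 : z ≠ 1)
    (H : Matrix (Fin n) (Fin n) ℂ)
    (hH : H = (1 - z) • (S.map Complex.ofReal) + (1 - star z) • (S.map Complex.ofReal)ᵀ)
    (hHerm : H.IsHermitian) :
    (∀ x ∈ Submodule.span ℂ ((fun (v : Fin n → ℝ) => fun i => (v i : ℂ)) '' N),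
      ∀ y ∈ Submodule.span ℂ ((fun (v : Fin n → ℝ) => fun i => (v i : ℂ)) '' N),
        star x ⬝ᵥ H.mulVec y = 0) ∧
    |hermSig H hHerm| ≤ (n : ℤ) - 2 * d + Module.finrank ℂ (LinearMap.ker H.mulVecLin) := by
  classical
  set W := Submodule.span ℂ ((fun (v : Fin n → ℝ) => fun i => (v i : ℂ)) '' N) with hW
  -- Part 1
  have part1 : ∀ x ∈ W, ∀ y ∈ W, star x ⬝ᵥ H.mulVec y = 0 := by
    intro x hx y hy
    induction hx, hy using Submodule.span_induction₂ with
    | mem_mem u w hu hw =>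
      obtain ⟨u', hu', rfl⟩ := hu
      obtain ⟨w', hw', rfl⟩ := hw
      have hstar : star (fun i => (u' i : ℂ)) = fun i => (u' i : ℂ) := by
        funext i; simp [Pi.star_apply, Complex.conj_ofReal]
      have hdot1 : (fun i => (u' i : ℂ)) ⬝ᵥ (S.map Complex.ofReal).mulVec (fun i => (w' i : ℂ))
          = ((u' ⬝ᵥ S.mulVec w' : ℝ) : ℂ) := by
        simp [dotProduct, mulVec, Matrix.map_apply, Finset.mul_sum]
      have hdot2 : (fun i => (u' i : ℂ)) ⬝ᵥ ((S.map Complex.ofReal)ᵀ).mulVec (fun i => (w' i : ℂ))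
          = ((w' ⬝ᵥ S.mulVec u' : ℝ) : ℂ) := by
        have htr : u' ⬝ᵥ Sᵀ.mulVec w' = w' ⬝ᵥ S.mulVec u' := by
          rw [dotProduct_mulVec, vecMul_transpose, dotProduct_comm]
        rw [← Matrix.transpose_map]
        calc (fun i => (u' i : ℂ)) ⬝ᵥ ((Sᵀ).map Complex.ofReal).mulVec (fun i => (w' i : ℂ))
            = ((u' ⬝ᵥ Sᵀ.mulVec w' : ℝ) : ℂ) := by
              simp [dotProduct, mulVec, Matrix.map_apply, Finset.mul_sum]
          _ = _ := by rw [htr]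
      rw [hH, hstar]
      rw [add_mulVec, smul_mulVec, smul_mulVec, dotProduct_add,
        dotProduct_smul, dotProduct_smul, hdot1, hdot2, hvan u' hu' w' hw', hvan w' hw' u' hu']
      simp
    | zero_left y hy => simp
    | zero_right x hx => simp
    | add_left x y w hx hy hw h1 h2 =>
      rw [star_add, add_dotProduct, h1, h2, add_zero]
    | add_right x y w hx hy hw h1 h2 =>
      rw [mulVec_add, dotProduct_add, h1, h2, add_zero]
    | smul_left r x y hx hy h1 =>
      rw [star_smul, smul_dotProduct, h1, smul_zero]
    | smul_right r x y hx hy h1 =>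
      rw [mulVec_smul, dotProduct_smul, h1, smul_zero]
  refine ⟨part1, ?_⟩
  -- Part 2
  have hWd : d ≤ Module.finrank ℂ W := hd ▸ complexify_finrank_le' N
  have hWform : ∀ x ∈ W, star x ⬝ᵥ H.mulVec x = 0 := fun x hx => part1 x hx x hx
  set pos : Finset (Fin n) := Finset.univ.filter fun i => 0 < hHerm.eigenvalues i with hpos
  set neg : Finset (Fin n) := Finset.univ.filter fun i => hHerm.eigenvalues i < 0 with hneg
  have hp : pos.card + Module.finrank ℂ W ≤ n := by
    refine card_add_finrank_le' H hHerm W hWform 1 pos fun i hi => ?_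
    rw [hpos, Finset.mem_filter] at hi
    simpa using hi.2
  have hq : neg.card + Module.finrank ℂ W ≤ n := by
    refine card_add_finrank_le' H hHerm W hWform (-1) neg fun i hi => ?_
    rw [hneg, Finset.mem_filter] at hi
    have := hi.2
    nlinarith
  -- rank and nullity
  have hrank : H.rank = pos.card + neg.card := by
    rw [hHerm.rank_eq_card_non_zero_eigs]
    rw [Fintype.card_subtype]
    have hsplit : (Finset.univ.filter fun i => hHerm.eigenvalues i ≠ 0)
        = pos ∪ neg := by
      ext i
      simp only [Finset.mem_filter, Finset.mem_union, Finset.mem_univ, true_and, hpos, hneg]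
      constructor
      · intro h; rcases h.lt_or_gt with h' | h'
        · exact Or.inr h'
        · exact Or.inl h'
      · rintro (h | h) <;> [exact ne_of_gt h; exact ne_of_lt h]
    rw [hsplit, Finset.card_union_of_disjoint]
    rw [Finset.disjoint_filter]
    intro i _ h1 h2
    exact absurd h1 (lt_asymm h2)
  have hnull : H.rank + Module.finrank ℂ (LinearMap.ker H.mulVecLin) = n := by
    have := LinearMap.finrank_range_add_finrank_ker H.mulVecLin
    rw [Matrix.rank]
    simpa using this
  -- arithmetic
  rw [hermSig, abs_le, ← hpos, ← hneg]
  have h1 : (pos.card : ℤ) + Module.finrank ℂ W ≤ n := by exact_mod_cast hp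
  have h2 : (neg.card : ℤ) + Module.finrank ℂ W ≤ n := by exact_mod_cast hq
  have h3 : (d : ℤ) ≤ Module.finrank ℂ W := by exact_mod_cast hWd
  have h4 : (pos.card : ℤ) + neg.card + Module.finrank ℂ (LinearMap.ker H.mulVecLin) = n := by
    have := hnull
    rw [hrank] at this
    exact_mod_cast this
  constructor <;> omega
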